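/- Let K be a compact, connected, metrizable abelian group with Haar probability measure m. Then for all measurable subsets I, J of K, the (outer) Haar measure of the difference set J - I satisfies m(J - I) ≥ min(1, m(I) + m(J)), provided I and J are nonempty. -/

import Mathlib

open MeasureTheory Set Filter Topology
open scoped Pointwise ENNReal

set_option linter.unusedSectionVars false

namespace KneserAux

noncomputable section

variable {K : Type*} [MetricSpace K] [AddCommGroup K] [IsTopologicalAddGroup K]
    [CompactSpace K] [MeasurableSpace K] [BorelSpace K]

/-- Iterated union `A ∪ (e+A) ∪ ... ∪ (ne+A)`. -/
def itU (e : K) (A : Set K) : ℕ → Set K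
  | 0 => A
  | n+1 => itU e A n ∪ (e +ᵥ itU e A n)

/-- Iterated intersection `B ∩ (B-e) ∩ ... ∩ (B-ne)`. -/
def itI (e : K) (B : Set K) : ℕ → Set K
  | 0 => B
  | n+1 => itI e B n ∩ ((-e) +ᵥ itI e B n)

section meas

variable (m : Measure K) [m.IsAddHaarMeasure] [IsProbabilityMeasure m]

lemma meas_vadd (g : K) (X : Set K) : m (g +ᵥ X) = m X := measure_vadd m g X

lemma diff_vadd_meas (e : K) (X : Set K) :
    m ((e +ᵥ X) \ X) = m (X \ ((-e) +ᵥ X)) := by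
  have h : (e +ᵥ X) \ X = e +ᵥ (X \ ((-e) +ᵥ X)) := by
    rw [vadd_set_sdiff, vadd_vadd, add_neg_cancel, zero_vadd]
  rw [h, meas_vadd]

lemma diff_comm_meas (g : K) (X : Set K) (hX : MeasurableSet X) :
    m (X \ (g +ᵥ X)) = m ((g +ᵥ X) \ X) := by
  have h1 := measure_inter_add_diff (μ := m) X (hX.const_vadd g)
  have h2 := measure_inter_add_diff (μ := m) (g +ᵥ X) hX
  rw [inter_comm, meas_vadd] at h2
  exact (ENNReal.add_right_inj (measure_ne_top m _)).mp (h1.trans h2.symm)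

lemma union_vadd_meas (e : K) (X : Set K) (hX : MeasurableSet X) :
    m (X ∪ (e +ᵥ X)) = m X + m ((e +ᵥ X) \ X) := by
  rw [← union_diff_self, measure_union disjoint_sdiff_self_right ((hX.const_vadd e).diff hX)]

end meas

/-- From Hausdorff convergence of nonempty compacts, points in the limit are limits of points. -/
lemma exists_approx_seq (T : ℕ → TopologicalSpace.NonemptyCompacts K)
    (L : TopologicalSpace.NonemptyCompacts K) (hT : Tendsto T atTop (𝓝 L))
    {x : K} (hx : x ∈ (L : Set K)) :
    ∃ y : ℕ → K, (∀ n, y n ∈ (T n : Set K)) ∧ Tendsto y atTop (𝓝 x) := by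
  have hsel : ∀ n, ∃ y ∈ (T n : Set K), EMetric.infEdist x (T n : Set K) = edist x y :=
    fun n => (T n).isCompact.exists_infEdist_eq_edist (T n).nonempty x
  choose y hy hyd using hsel
  refine ⟨y, hy, ?_⟩
  rw [tendsto_iff_edist_tendsto_0]
  have h0 : Tendsto (fun n => edist (T n) L) atTop (𝓝 0) := tendsto_iff_edist_tendsto_0.mp hT
  have hbound : ∀ n, edist (y n) x ≤ edist (T n) L := by
    intro n
    calc edist (y n) x = EMetric.infEdist x (T n : Set K) := by rw [edist_comm, hyd n]
    _ ≤ EMetric.hausdorffEdist (L : Set K) (T n : Set K) :=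
        EMetric.infEdist_le_hausdorffEdist_of_mem hx
    _ = edist (T n) L := by
        show _ = EMetric.hausdorffEdist (T n : Set K) (L : Set K)
        exact EMetric.hausdorffEdist_comm
  exact tendsto_of_tendsto_of_tendsto_of_le_of_le tendsto_const_nhds h0
    (fun n => zero_le) hbound

/-- Upper semicontinuity of the measure along Hausdorff convergence. -/
lemma eventually_measure_le (m : Measure K) [m.IsAddHaarMeasure] [IsProbabilityMeasure m]
    (T : ℕ → TopologicalSpace.NonemptyCompacts K)
    (L : TopologicalSpace.NonemptyCompacts K) (hT : Tendsto T atTop (𝓝 L))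
    {ε : ℝ≥0∞} (hε : ε ≠ 0) :
    ∀ᶠ n in atTop, m (T n : Set K) ≤ m (L : Set K) + ε := by
  obtain ⟨U, hLU, hUo, hUm⟩ := Set.exists_isOpen_lt_add (L : Set K) (measure_ne_top m _) hε
  obtain ⟨δ, hδ0, hδU⟩ := L.isCompact.exists_thickening_subset_open hUo hLU
  have h0 : Tendsto (fun n => edist (T n) L) atTop (𝓝 0) := tendsto_iff_edist_tendsto_0.mp hT
  have hball : ∀ᶠ n in atTop, edist (T n) L < ENNReal.ofReal δ :=
    h0.eventually_lt_const (ENNReal.ofReal_pos.mpr hδ0)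
  filter_upwards [hball] with n hn
  have hsub : (T n : Set K) ⊆ U := by
    intro x hx
    apply hδU
    rw [Metric.mem_thickening_iff_infEdist_lt]
    calc EMetric.infEdist x (L : Set K)
        ≤ EMetric.hausdorffEdist (T n : Set K) (L : Set K) :=
        EMetric.infEdist_le_hausdorffEdist_of_mem hx
    _ < _ := hn
  exact le_trans (measure_mono hsub) hUm.le

theorem kneser_compact [ConnectedSpace K]
    (m : Measure K) [m.IsAddHaarMeasure] [IsProbabilityMeasure m]
    (A B : Set K) (hA : IsCompact A) (hB : IsCompact B)
    (hAne : A.Nonempty) (hBne : B.Nonempty) :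
    min 1 (m A + m B) ≤ m (A + B) := by
  classical
  by_contra hcon
  rw [not_le] at hcon
  set S : Set K := A + B with hS_def
  have hS : IsCompact S := hA.add hB
  have hS1 : m S < 1 := hcon.trans_le (min_le_left _ _)
  have hS2 : m S < m A + m B := hcon.trans_le (min_le_right _ _)
  -- the hyperspace of pairs
  let 𝒦 := TopologicalSpace.NonemptyCompacts K
  -- level sets
  let LEV : ℝ≥0∞ → ℝ≥0∞ → Set (𝒦 × 𝒦) := fun c₁ c₂ =>
    {p | ((p.1 : Set K) + (p.2 : Set K) ⊆ S) ∧
      c₁ ≤ m (p.1 : Set K) + m (p.2 : Set K) ∧ c₂ ≤ m (p.1 : Set K)}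
  have hLEV_closed : ∀ c₁ c₂, IsClosed (LEV c₁ c₂) := by
    intro c₁ c₂
    apply IsSeqClosed.isClosed
    intro ps p hmem hlim
    have h1 : Tendsto (fun n => (ps n).1) atTop (𝓝 p.1) :=
      (continuous_fst.tendsto p).comp hlim
    have h2 : Tendsto (fun n => (ps n).2) atTop (𝓝 p.2) :=
      (continuous_snd.tendsto p).comp hlim
    refine ⟨?_, ?_, ?_⟩
    · rintro z hz
      rw [Set.mem_add] at hz
      obtain ⟨a, ha, b, hb, rfl⟩ := hz
      obtain ⟨ya, hya, hta⟩ := exists_approx_seq _ _ h1 ha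
      obtain ⟨yb, hyb, htb⟩ := exists_approx_seq _ _ h2 hb
      have hmemS : ∀ n, ya n + yb n ∈ S := fun n =>
        (hmem n).1 (Set.add_mem_add (hya n) (hyb n))
      exact hS.isClosed.mem_of_tendsto (hta.add htb) (Eventually.of_forall hmemS)
    · refine ENNReal.le_of_forall_pos_le_add fun ε hε _ => ?_
      have hne2 : ((ε : ℝ≥0∞) / 2) ≠ 0 := by
        simp [ENNReal.div_eq_zero_iff, hε.ne']
      obtain ⟨n, hn1, hn2⟩ :=
        ((eventually_measure_le m _ _ h1 hne2).and (eventually_measure_le m _ _ h2 hne2)).exists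
      calc c₁ ≤ m ((ps n).1 : Set K) + m ((ps n).2 : Set K) := (hmem n).2.1
      _ ≤ (m (p.1 : Set K) + (ε : ℝ≥0∞)/2) + (m (p.2 : Set K) + (ε : ℝ≥0∞)/2) :=
          add_le_add hn1 hn2
      _ = (m (p.1 : Set K) + m (p.2 : Set K)) + (ε : ℝ≥0∞) := by
          rw [add_add_add_comm, ENNReal.add_halves]
    · refine ENNReal.le_of_forall_pos_le_add fun ε hε _ => ?_
      obtain ⟨n, hn1⟩ := (eventually_measure_le m _ _ h1 (ENNReal.coe_ne_zero.mpr hε.ne')).exists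
      exact le_trans (hmem n).2.2 hn1
  -- the admissible set and stage-1 maximizer
  have hCne : (LEV 0 0).Nonempty := by
    refine ⟨(⟨⟨A, hA⟩, hAne⟩, ⟨⟨B, hB⟩, hBne⟩), ?_, zero_le, zero_le⟩
    exact subset_rfl
  haveI : Nonempty (LEV 0 0) := hCne.to_subtype
  have hmax1 : ∃ P : 𝒦 × 𝒦, P ∈ LEV 0 0 ∧ ∀ q ∈ LEV 0 0,
      m (q.1 : Set K) + m (q.2 : Set K) ≤ m (P.1 : Set K) + m (P.2 : Set K) := by
    have key := IsCompact.nonempty_iInter_of_directed_nonempty_isCompact_isClosed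
      (fun q : LEV 0 0 => LEV (m (q.1.1 : Set K) + m (q.1.2 : Set K)) 0) ?_ ?_ ?_ ?_
    · obtain ⟨P, hP⟩ := key
      simp only [mem_iInter] at hP
      obtain ⟨q0⟩ := (inferInstance : Nonempty (LEV 0 0))
      refine ⟨P, ⟨(hP q0).1, zero_le, zero_le⟩, fun q hq => (hP ⟨q, hq⟩).2.1⟩
    · intro q r
      rcases le_total (m (q.1.1 : Set K) + m (q.1.2 : Set K))
        (m (r.1.1 : Set K) + m (r.1.2 : Set K)) with h | h
      · exact ⟨r, fun p hp => ⟨hp.1, h.trans hp.2.1, hp.2.2⟩, fun p hp => hp⟩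
      · exact ⟨q, fun p hp => hp, fun p hp => ⟨hp.1, h.trans hp.2.1, hp.2.2⟩⟩
    · exact fun q => ⟨q.1, q.2.1, le_rfl, zero_le⟩
    · exact fun q => (hLEV_closed _ _).isCompact
    · exact fun q => hLEV_closed _ _
  obtain ⟨P1, hP1C, hP1max⟩ := hmax1
  set σ : ℝ≥0∞ := m (P1.1 : Set K) + m (P1.2 : Set K) with hσ_def
  have hσ_ge : m A + m B ≤ σ :=
    hP1max (⟨⟨A, hA⟩, hAne⟩, ⟨⟨B, hB⟩, hBne⟩) ⟨subset_rfl, zero_le, zero_le⟩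
  -- stage 2: among σ-maximal pairs, maximize the measure of the first component
  have hP1M : P1 ∈ LEV σ 0 := ⟨hP1C.1, le_rfl, zero_le⟩
  haveI : Nonempty (LEV σ 0) := ⟨⟨P1, hP1M⟩⟩
  have hmax2 : ∃ P : 𝒦 × 𝒦, P ∈ LEV σ 0 ∧ ∀ q ∈ LEV σ 0,
      m (q.1 : Set K) ≤ m (P.1 : Set K) := by
    have key := IsCompact.nonempty_iInter_of_directed_nonempty_isCompact_isClosed
      (fun q : LEV σ 0 => LEV σ (m (q.1.1 : Set K))) ?_ ?_ ?_ ?_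
    · obtain ⟨P, hP⟩ := key
      simp only [mem_iInter] at hP
      obtain ⟨q0⟩ := (inferInstance : Nonempty (LEV σ 0))
      refine ⟨P, ⟨(hP q0).1, (hP q0).2.1, zero_le⟩, fun q hq => (hP ⟨q, hq⟩).2.2⟩
    · intro q r
      rcases le_total (m (q.1.1 : Set K)) (m (r.1.1 : Set K)) with h | h
      · exact ⟨r, fun p hp => ⟨hp.1, hp.2.1, h.trans hp.2.2⟩, fun p hp => hp⟩
      · exact ⟨q, fun p hp => hp, fun p hp => ⟨hp.1, hp.2.1, h.trans hp.2.2⟩⟩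
    · exact fun q => ⟨q.1, q.2.1, q.2.2.1, le_rfl⟩
    · exact fun q => (hLEV_closed _ _).isCompact
    · exact fun q => hLEV_closed _ _
  obtain ⟨Ps, hPsM, hPsmax⟩ := hmax2
  set 𝔸 : Set K := (Ps.1 : Set K) with h𝔸_def
  set 𝔹 : Set K := (Ps.2 : Set K) with h𝔹_def
  have hPsC : 𝔸 + 𝔹 ⊆ S := hPsM.1
  have hsum : m 𝔸 + m 𝔹 = σ := le_antisymm (hP1max _ ⟨hPsM.1, zero_le, zero_le⟩) hPsM.2.1
  have h𝔸cpt : IsCompact 𝔸 := Ps.1.isCompact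
  have h𝔹cpt : IsCompact 𝔹 := Ps.2.isCompact
  have h𝔸ne : 𝔸.Nonempty := Ps.1.nonempty
  have h𝔹ne : 𝔹.Nonempty := Ps.2.nonempty
  -- the deficiency t
  set t : ℝ≥0∞ := σ - m S with ht_def
  have hmSσ : m S < σ := hS2.trans_le hσ_ge
  have ht0 : t ≠ 0 := by
    simp only [ht_def, ne_eq, tsub_eq_zero_iff_le, not_le]
    exact hmSσ
  have htS : m S + t = σ := add_tsub_cancel_of_le hmSσ.le
  -- basic lower bound
  have hlow : ∀ X Y : Set K, X + Y ⊆ S → X.Nonempty → m X + m Y = σ → t ≤ m X := by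
    rintro X Y hsub ⟨a, ha⟩ heq
    have hYS : a +ᵥ Y ⊆ S := by
      rintro z ⟨y, hy, rfl⟩
      exact hsub (Set.add_mem_add ha hy)
    have hYm : m Y ≤ m S := (meas_vadd m a Y) ▸ measure_mono hYS
    have hkey : m S + t ≤ m S + m X := by
      calc m S + t = m X + m Y := htS.trans heq.symm
      _ ≤ m X + m S := add_le_add_right hYm _
      _ = m S + m X := add_comm _ _
    exact (ENNReal.add_le_add_iff_left (measure_ne_top m S)).mp hkey
  -- small-translation neighborhoods
  have hV : ∀ X : Set K, IsCompact X → ∃ V ∈ 𝓝 (0 : K), ∀ e ∈ V, m ((e +ᵥ X) \ X) < t := by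
    intro X hX
    obtain ⟨U, hXU, hUo, hUm⟩ := Set.exists_isOpen_lt_add X (measure_ne_top m _) ht0
    obtain ⟨V, hV0, hXV⟩ := compact_open_separated_add_right hX hUo hXU
    refine ⟨V, hV0, fun e he => ?_⟩
    have hsub : (e +ᵥ X) \ X ⊆ U \ X := by
      apply diff_subset_diff_left
      rintro z ⟨x, hx, rfl⟩
      have : x + e ∈ X + V := Set.add_mem_add hx he
      simpa [vadd_eq_add, add_comm] using hXV this
    calc m ((e +ᵥ X) \ X) ≤ m (U \ X) := measure_mono hsub
    _ < t := measure_diff_lt_of_lt_add hX.isClosed.measurableSet.nullMeasurableSet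
        hXU (measure_ne_top m _) hUm
  -- the core: any small translation spills no mass out of 𝔸
  have hcore : ∀ e : K, m ((e +ᵥ 𝔸) \ 𝔸) < t → m ((e +ᵥ 𝔹) \ 𝔹) < t →
      m ((e +ᵥ 𝔸) \ 𝔸) = 0 := by
    intro e hue hve
    set An : ℕ → Set K := itU e 𝔸 with hAn_def
    set Bn : ℕ → Set K := itI e 𝔹 with hBn_def
    have hAstep : ∀ n, An (n+1) = An n ∪ (e +ᵥ An n) := fun n => rfl
    have hBstep : ∀ n, Bn (n+1) = Bn n ∩ ((-e) +ᵥ Bn n) := fun n => rfl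
    have hA0 : An 0 = 𝔸 := rfl
    have hB0 : Bn 0 = 𝔹 := rfl
    have hAcpt : ∀ n, IsCompact (An n) := by
      intro n
      induction n with
      | zero => exact h𝔸cpt
      | succ n ih => exact ih.union (ih.vadd e)
    have hBcpt : ∀ n, IsCompact (Bn n) := by
      intro n
      induction n with
      | zero => exact h𝔹cpt
      | succ n ih => exact ih.inter_right (ih.vadd (-e)).isClosed
    have hAmeas : ∀ n, MeasurableSet (An n) := fun n => (hAcpt n).isClosed.measurableSet
    have hBmeas : ∀ n, MeasurableSet (Bn n) := fun n => (hBcpt n).isClosed.measurableSet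
    have hAnne : ∀ n, (An n).Nonempty := by
      intro n
      induction n with
      | zero => exact h𝔸ne
      | succ n ih => exact ih.mono subset_union_left
    have hmain : ∀ n, (Bn n).Nonempty ∧ (An n + Bn n ⊆ S) ∧ (m (An n) + m (Bn n) = σ) ∧
        (An n ∩ ((-e) +ᵥ An n)).Nonempty ∧ m ((e +ᵥ An n) \ An n) ≤ m ((e +ᵥ 𝔸) \ 𝔸) := by
      intro n
      induction n with
      | zero =>
        refine ⟨h𝔹ne, hPsC, hsum, ?_, le_rfl⟩
        rw [hA0]
        by_contra hemp
        rw [Set.not_nonempty_iff_eq_empty] at hemp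
        have hinter : (e +ᵥ 𝔸) ∩ 𝔸 = e +ᵥ (𝔸 ∩ ((-e) +ᵥ 𝔸)) := by
          rw [vadd_set_inter, vadd_vadd, add_neg_cancel, zero_vadd]
        have hdisj : Disjoint (e +ᵥ 𝔸) 𝔸 := by
          rw [Set.disjoint_iff_inter_eq_empty, hinter, hemp]
          simp
        have hmA : m ((e +ᵥ 𝔸) \ 𝔸) = m 𝔸 := by
          rw [hdisj.sdiff_eq_left, meas_vadd]
        have hta : t ≤ m 𝔸 := hlow 𝔸 𝔹 hPsC h𝔸ne hsum
        rw [hmA] at hue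
        exact absurd hta (not_le.mpr hue)
      | succ n ih =>
        obtain ⟨hBne', hsubn, heqn, hintn, hulen⟩ := ih
        have hXm : MeasurableSet (An n) := hAmeas n
        have hYm : MeasurableSet (Bn n) := hBmeas n
        have hXm' : MeasurableSet ((-e) +ᵥ An n) := hXm.const_vadd (-e)
        have hYm' : MeasurableSet ((-e) +ᵥ Bn n) := hYm.const_vadd (-e)
        -- the two transfer quantities
        set u : ℝ≥0∞ := m ((e +ᵥ An n) \ An n) with hu_def
        set u' : ℝ≥0∞ := m ((Bn n) \ ((-e) +ᵥ Bn n)) with hu'_def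
        have hu'2 : m ((e +ᵥ Bn n) \ Bn n) = u' := diff_vadd_meas m e (Bn n)
        have hI1 : m (An n ∩ ((-e) +ᵥ An n)) + u = m (An n) := by
          rw [hu_def, diff_vadd_meas]
          exact measure_inter_add_diff _ hXm'
        -- the reverse transform is admissible
        have hrevC : (An n ∩ ((-e) +ᵥ An n)) + (Bn n ∪ (e +ᵥ Bn n)) ⊆ S := by
          rintro z hz
          rw [Set.mem_add] at hz
          obtain ⟨a, ha, b, hb, rfl⟩ := hz
          rcases hb with hb | hb
          · exact hsubn (Set.add_mem_add ha.1 hb)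
          · obtain ⟨y, hy, rfl⟩ := hb
            obtain ⟨x', hx', rfl⟩ := ha.2
            have hzeq : ((-e) +ᵥ x') + (e +ᵥ y) = x' + y := by
              simp only [vadd_eq_add]
              abel
            rw [hzeq]
            exact hsubn (Set.add_mem_add hx' hy)
        have hrev_le : m (An n ∩ ((-e) +ᵥ An n)) + (m (Bn n) + u') ≤ σ := by
          have hp : ((⟨⟨An n ∩ ((-e) +ᵥ An n),
                (hAcpt n).inter_right ((hAcpt n).vadd (-e)).isClosed⟩, hintn⟩,
              ⟨⟨Bn n ∪ (e +ᵥ Bn n), (hBcpt n).union ((hBcpt n).vadd e)⟩,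
                hBne'.mono subset_union_left⟩) : 𝒦 × 𝒦) ∈ LEV 0 0 :=
            ⟨hrevC, zero_le, zero_le⟩
          have h := hP1max _ hp
          rw [show m ((((⟨⟨Bn n ∪ (e +ᵥ Bn n), (hBcpt n).union ((hBcpt n).vadd e)⟩,
                hBne'.mono subset_union_left⟩ : 𝒦)) : Set K)) =
              m (Bn n) + u' from (union_vadd_meas m e (Bn n) hYm).trans (by rw [hu'2])] at h
          exact h
        have hfin1 : m (An n ∩ ((-e) +ᵥ An n)) + m (Bn n) ≠ ∞ :=
          ENNReal.add_ne_top.mpr ⟨measure_ne_top m _, measure_ne_top m _⟩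
        have hker : u' ≤ u := by
          refine (ENNReal.add_le_add_iff_left hfin1).mp ?_
          calc (m (An n ∩ ((-e) +ᵥ An n)) + m (Bn n)) + u'
              = m (An n ∩ ((-e) +ᵥ An n)) + (m (Bn n) + u') := by ring
          _ ≤ σ := hrev_le
          _ = m (An n) + m (Bn n) := heqn.symm
          _ = (m (An n ∩ ((-e) +ᵥ An n)) + m (Bn n)) + u := by rw [← hI1]; ring
        have hu_lt : u < t := lt_of_le_of_lt hulen hue
        -- next B is nonempty
        have hBn1 : (Bn (n+1)).Nonempty := by
          by_contra hemp
          rw [Set.not_nonempty_iff_eq_empty, hBstep] at hemp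
          have hYdiff : Bn n \ ((-e) +ᵥ Bn n) = Bn n := by
            apply Disjoint.sdiff_eq_left
            rw [Set.disjoint_iff_inter_eq_empty]
            exact hemp
          have h1 : t ≤ m (Bn n) := by
            refine hlow (Bn n) (An n) ?_ hBne' ?_
            · rw [add_comm]; exact hsubn
            · rw [add_comm]; exact heqn
          have h2 : t ≤ u' := by rw [hu'_def, hYdiff]; exact h1
          exact absurd (lt_of_le_of_lt (h2.trans hker) hu_lt) (lt_irrefl t)
        -- the forward transform is admissible
        have hfwdC : An (n+1) + Bn (n+1) ⊆ S := by
          rw [hAstep, hBstep]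
          rintro z hz
          rw [Set.mem_add] at hz
          obtain ⟨a, ha, b, hb, rfl⟩ := hz
          rcases ha with ha | ha
          · exact hsubn (Set.add_mem_add ha hb.1)
          · obtain ⟨x', hx', rfl⟩ := ha
            obtain ⟨y, hy, rfl⟩ := hb.2
            have hzeq : (e +ᵥ x') + ((-e) +ᵥ y) = x' + y := by
              simp only [vadd_eq_add]
              abel
            rw [hzeq]
            exact hsubn (Set.add_mem_add hx' hy)
        have hA1 : m (An (n+1)) = m (An n) + u := by
          rw [hAstep]
          exact union_vadd_meas m e (An n) hXm
        have hB1 : m (Bn (n+1)) + u' = m (Bn n) := by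
          rw [hBstep, hu'_def]
          exact measure_inter_add_diff _ hYm'
        have hfwd_le : m (An (n+1)) + m (Bn (n+1)) ≤ σ := by
          have hp : ((⟨⟨An (n+1), hAcpt (n+1)⟩, hAnne (n+1)⟩,
              ⟨⟨Bn (n+1), hBcpt (n+1)⟩, hBn1⟩) : 𝒦 × 𝒦) ∈ LEV 0 0 :=
            ⟨hfwdC, zero_le, zero_le⟩
          exact hP1max _ hp
        have hfin2 : m (An n) + m (Bn (n+1)) ≠ ∞ :=
          ENNReal.add_ne_top.mpr ⟨measure_ne_top m _, measure_ne_top m _⟩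
        have hker2 : u ≤ u' := by
          refine (ENNReal.add_le_add_iff_left hfin2).mp ?_
          calc (m (An n) + m (Bn (n+1))) + u
              = m (An (n+1)) + m (Bn (n+1)) := by rw [hA1]; ring
          _ ≤ σ := hfwd_le
          _ = m (An n) + m (Bn n) := heqn.symm
          _ = (m (An n) + m (Bn (n+1))) + u' := by rw [← hB1]; ring
        have hueq : u = u' := le_antisymm hker2 hker
        have heq1 : m (An (n+1)) + m (Bn (n+1)) = σ := by
          calc m (An (n+1)) + m (Bn (n+1)) = (m (An n) + u) + m (Bn (n+1)) := by rw [hA1]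
          _ = m (An n) + (m (Bn (n+1)) + u') := by rw [hueq]; ring
          _ = m (An n) + m (Bn n) := by rw [hB1]
          _ = σ := heqn
        have hint1 : (An (n+1) ∩ ((-e) +ᵥ An (n+1))).Nonempty := by
          obtain ⟨a, ha⟩ := hAnne n
          refine ⟨a, ?_, ?_⟩
          · rw [hAstep]; exact Or.inl ha
          · rw [mem_vadd_set_iff_neg_vadd_mem, neg_neg, hAstep]
            exact Or.inr ⟨a, ha, rfl⟩
        have hule1 : m ((e +ᵥ An (n+1)) \ An (n+1)) ≤ m ((e +ᵥ 𝔸) \ 𝔸) := by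
          have hsub' : (e +ᵥ An (n+1)) \ An (n+1) ⊆ e +ᵥ ((e +ᵥ An n) \ An n) := by
            rintro z ⟨hz1, hz2⟩
            rw [hAstep, vadd_set_union] at hz1
            rcases hz1 with hz1 | hz1
            · exact absurd (by rw [hAstep]; exact Or.inr hz1) hz2
            · obtain ⟨w, hw, rfl⟩ := hz1
              refine ⟨w, ⟨hw, fun hwX => hz2 ?_⟩, rfl⟩
              rw [hAstep]
              exact Or.inr ⟨w, hwX, rfl⟩
          calc m ((e +ᵥ An (n+1)) \ An (n+1)) ≤ m (e +ᵥ ((e +ᵥ An n) \ An n)) :=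
              measure_mono hsub'
          _ = u := meas_vadd m e _
          _ ≤ _ := hulen
        exact ⟨hBn1, hfwdC, heq1, hint1, hule1⟩
    -- pass to the limit
    set Aω : Set K := closure (⋃ n, An n) with hAω_def
    set Bω : Set K := ⋂ n, Bn n with hBω_def
    have hBanti : Antitone Bn := antitone_nat_of_succ_le fun n => by
      rw [hBstep]; exact inter_subset_left
    have hBω_ne : Bω.Nonempty := by
      apply IsCompact.nonempty_iInter_of_directed_nonempty_isCompact_isClosed Bn
        (hBanti.directed_ge) (fun n => (hmain n).1) hBcpt (fun n => (hBcpt n).isClosed)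
    have hAωcl : IsClosed Aω := isClosed_closure
    have hAωcpt : IsCompact Aω := hAωcl.isCompact
    have hAωne : Aω.Nonempty := by
      obtain ⟨a, ha⟩ := h𝔸ne
      exact ⟨a, subset_closure (mem_iUnion.mpr ⟨0, by rw [hA0]; exact ha⟩)⟩
    have hωC : Aω + Bω ⊆ S := by
      rintro z hz
      rw [Set.mem_add] at hz
      obtain ⟨x, hx, y, hy, rfl⟩ := hz
      have hyn : ∀ n, y ∈ Bn n := fun n => mem_iInter.mp hy n
      have him : x + y ∈ (fun w => w + y) '' closure (⋃ n, An n) := ⟨x, hx, rfl⟩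
      have hsub2 : (fun w => w + y) '' closure (⋃ n, An n) ⊆
          closure ((fun w => w + y) '' (⋃ n, An n)) :=
        image_closure_subset_closure_image (continuous_add_right y)
      have hsub3 : (fun w => w + y) '' (⋃ n, An n) ⊆ S := by
        rintro _ ⟨w, hw, rfl⟩
        obtain ⟨n, hwn⟩ := mem_iUnion.mp hw
        exact (hmain n).2.1 (Set.add_mem_add hwn (hyn n))
      exact (hS.isClosed.closure_subset_iff.mpr hsub3) (hsub2 him)
    have hBtend : Tendsto (fun n => m (Bn n)) atTop (𝓝 (m Bω)) :=
      tendsto_measure_iInter_atTop (fun n => (hBmeas n).nullMeasurableSet) hBanti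
        ⟨0, measure_ne_top m _⟩
    have hσle : σ ≤ m Aω + m Bω := by
      have hconst : ∀ n, σ ≤ m Aω + m (Bn n) := fun n => by
        rw [← (hmain n).2.2.1]
        exact add_le_add_left
          (measure_mono ((subset_iUnion An n).trans subset_closure)) _
      have htt : Tendsto (fun n => m Aω + m (Bn n)) atTop (𝓝 (m Aω + m Bω)) :=
        Tendsto.const_add _ hBtend
      exact ge_of_tendsto htt (Eventually.of_forall hconst)
    have hqωM : ((⟨⟨Aω, hAωcpt⟩, hAωne⟩, ⟨⟨Bω, (hBcpt 0).of_isClosed_subset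
        (isClosed_iInter fun n => (hBcpt n).isClosed) (iInter_subset Bn 0)⟩, hBω_ne⟩) : 𝒦 × 𝒦)
        ∈ LEV σ 0 := ⟨hωC, hσle, zero_le⟩
    have hAωle : m Aω ≤ m 𝔸 := hPsmax _ hqωM
    have hA1ω : m 𝔸 + m ((e +ᵥ 𝔸) \ 𝔸) ≤ m 𝔸 := by
      have h1 : m (An 1) = m 𝔸 + m ((e +ᵥ 𝔸) \ 𝔸) := by
        rw [hAstep, hA0]
        exact union_vadd_meas m e 𝔸 h𝔸cpt.isClosed.measurableSet
      have h2 : m (An 1) ≤ m Aω := measure_mono ((subset_iUnion An 1).trans subset_closure)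
      exact h1 ▸ h2.trans hAωle
    have hle0 : m ((e +ᵥ 𝔸) \ 𝔸) ≤ 0 :=
      (ENNReal.add_le_add_iff_left (measure_ne_top m 𝔸)).mp
        (le_trans hA1ω (le_add_right le_rfl))
    exact le_antisymm hle0 (zero_le)
  -- the subgroup of null translations
  obtain ⟨VA, hVA0, hVAt⟩ := hV 𝔸 h𝔸cpt
  obtain ⟨VB, hVB0, hVBt⟩ := hV 𝔹 h𝔹cpt
  have h𝔸meas : MeasurableSet 𝔸 := h𝔸cpt.isClosed.measurableSet
  let H : AddSubgroup K :=
    { carrier := {g | m ((g +ᵥ 𝔸) \ 𝔸) = 0}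
      zero_mem' := by simp [zero_vadd]
      add_mem' := by
        intro a b ha hb
        simp only [mem_setOf_eq] at ha hb ⊢
        have hsub : ((a + b) +ᵥ 𝔸) \ 𝔸 ⊆
            (((a + b) +ᵥ 𝔸) \ (b +ᵥ 𝔸)) ∪ ((b +ᵥ 𝔸) \ 𝔸) := by
          intro z hz
          by_cases hzb : z ∈ b +ᵥ 𝔸
          · exact Or.inr ⟨hzb, hz.2⟩
          · exact Or.inl ⟨hz.1, hzb⟩
        have heq2 : (((a + b) +ᵥ 𝔸) \ (b +ᵥ 𝔸)) = b +ᵥ ((a +ᵥ 𝔸) \ 𝔸) := by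
          rw [vadd_set_sdiff, vadd_vadd, add_comm b a]
        refine le_antisymm ?_ (zero_le)
        calc m (((a + b) +ᵥ 𝔸) \ 𝔸)
            ≤ m ((((a + b) +ᵥ 𝔸) \ (b +ᵥ 𝔸)) ∪ ((b +ᵥ 𝔸) \ 𝔸)) := measure_mono hsub
        _ ≤ m (((a + b) +ᵥ 𝔸) \ (b +ᵥ 𝔸)) + m ((b +ᵥ 𝔸) \ 𝔸) := measure_union_le _ _
        _ = m ((a +ᵥ 𝔸) \ 𝔸) + m ((b +ᵥ 𝔸) \ 𝔸) := by rw [heq2, meas_vadd]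
        _ = 0 := by rw [ha, hb, add_zero]
      neg_mem' := by
        intro a ha
        simp only [mem_setOf_eq] at ha ⊢
        have h1 : m (((-a) +ᵥ 𝔸) \ 𝔸) = m (𝔸 \ (a +ᵥ 𝔸)) := by
          rw [diff_vadd_meas m (-a) 𝔸, neg_neg]
        rw [h1, diff_comm_meas m a 𝔸 h𝔸meas, ha] }
  have hVH : VA ∩ VB ⊆ (H : Set K) := fun g hg => hcore g (hVAt g hg.1) (hVBt g hg.2)
  have hHnhds : (H : Set K) ∈ 𝓝 (0 : K) :=
    mem_of_superset (inter_mem hVA0 hVB0) hVH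
  have hHopen : IsOpen (H : Set K) := H.isOpen_of_mem_nhds hHnhds
  have hHuniv : (H : Set K) = univ :=
    IsClopen.eq_univ ⟨H.isClosed_of_isOpen hHopen, hHopen⟩ ⟨0, H.zero_mem⟩
  have hall : ∀ g : K, m ((g +ᵥ 𝔸) \ 𝔸) = 0 := by
    intro g
    have : g ∈ (H : Set K) := hHuniv ▸ mem_univ g
    exact this
  have hinterfull : ∀ g : K, m (𝔸 ∩ (g +ᵥ 𝔸)) = m 𝔸 := by
    intro g
    have h1 := measure_inter_add_diff (μ := m) 𝔸 (h𝔸meas.const_vadd g)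
    rw [diff_comm_meas m g 𝔸 h𝔸meas, hall g, add_zero] at h1
    exact h1
  -- Fubini: ∫ m(𝔸 ∩ (g+𝔸)) dg = (m 𝔸)²
  have hfub : ∫⁻ g, m (𝔸 ∩ (g +ᵥ 𝔸)) ∂m = m 𝔸 * m 𝔸 := by
    have hind : ∀ g x : K, (𝔸 ∩ (g +ᵥ 𝔸)).indicator (1 : K → ℝ≥0∞) x =
        𝔸.indicator 1 x * 𝔸.indicator 1 (-g + x) := by
      intro g x
      by_cases hx : x ∈ 𝔸 <;> by_cases hgx : x ∈ g +ᵥ 𝔸 <;>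
        simp_all [Set.indicator_apply, mem_vadd_set_iff_neg_vadd_mem, vadd_eq_add]
    have hmeasInd : Measurable (𝔸.indicator (1 : K → ℝ≥0∞)) :=
      measurable_const.indicator h𝔸meas
    calc ∫⁻ g, m (𝔸 ∩ (g +ᵥ 𝔸)) ∂m
        = ∫⁻ g, ∫⁻ x, 𝔸.indicator 1 x * 𝔸.indicator 1 (-g + x) ∂m ∂m := by
          refine lintegral_congr fun g => ?_
          rw [← lintegral_indicator_one (h𝔸meas.inter (h𝔸meas.const_vadd g))]
          exact lintegral_congr fun x => hind g x
    _ = ∫⁻ x, ∫⁻ g, 𝔸.indicator 1 x * 𝔸.indicator 1 (-g + x) ∂m ∂m := by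
          apply lintegral_lintegral_swap
          apply Measurable.aemeasurable
          apply Measurable.mul
          · exact hmeasInd.comp measurable_snd
          · exact hmeasInd.comp ((measurable_fst.neg).add measurable_snd)
    _ = ∫⁻ x, 𝔸.indicator 1 x * m 𝔸 ∂m := by
          refine lintegral_congr fun x => ?_
          have hm2 : Measurable fun g : K => 𝔸.indicator (1 : K → ℝ≥0∞) (-g + x) :=
            hmeasInd.comp (measurable_neg.add_const x)
          rw [lintegral_const_mul _ hm2]
          congr 1
          have hpre : (fun g : K => 𝔸.indicator (1 : K → ℝ≥0∞) (-g + x)) =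
              ((fun g : K => -g + x) ⁻¹' 𝔸).indicator 1 := by
            funext g
            by_cases hg : -g + x ∈ 𝔸 <;> simp [Set.indicator_apply, hg]
          have hmpre : MeasurableSet ((fun g : K => -g + x) ⁻¹' 𝔸) :=
            (measurable_neg.add_const x) h𝔸meas
          rw [hpre, lintegral_indicator_one hmpre]
          have h1 : (fun g : K => -g + x) ⁻¹' 𝔸 = -((fun y : K => x + y) ⁻¹' 𝔸) := by
            ext g
            simp [Set.mem_neg, add_comm]
          rw [h1, Measure.measure_neg, measure_preimage_add]
    _ = m 𝔸 * m 𝔸 := by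
          rw [lintegral_mul_const _ hmeasInd, lintegral_indicator_one h𝔸meas]
  have hAA : m 𝔸 = m 𝔸 * m 𝔸 := by
    rw [← hfub]
    rw [lintegral_congr fun g => hinterfull g, lintegral_const, measure_univ, mul_one]
  -- contradiction: 0 < t ≤ m 𝔸 ≤ m S < 1
  have h𝔸t : t ≤ m 𝔸 := hlow 𝔸 𝔹 hPsC h𝔸ne hsum
  have h𝔸0 : m 𝔸 ≠ 0 := fun h => ht0 (le_antisymm (h ▸ h𝔸t) (zero_le))
  have h𝔸S : m 𝔸 ≤ m S := by
    obtain ⟨b, hb⟩ := h𝔹ne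
    have : 𝔸 + {b} ⊆ S := fun z hz => by
      rw [Set.add_singleton] at hz
      obtain ⟨a, ha, rfl⟩ := hz
      exact hPsC (Set.add_mem_add ha hb)
    calc m 𝔸 = m (b +ᵥ 𝔸) := (meas_vadd m b 𝔸).symm
    _ ≤ m S := by
        refine measure_mono ?_
        rintro z ⟨a, ha, rfl⟩
        have : a + b ∈ S := hPsC (Set.add_mem_add ha hb)
        simpa [vadd_eq_add, add_comm] using this
  have h𝔸1 : m 𝔸 < 1 := lt_of_le_of_lt h𝔸S hS1
  have : m 𝔸 * m 𝔸 < 1 * m 𝔸 :=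
    (ENNReal.mul_lt_mul_iff_left h𝔸0 (measure_ne_top m 𝔸)).mpr h𝔸1
  rw [one_mul, ← hAA] at this
  exact lt_irrefl _ this

end

end KneserAux

theorem stmt4 {K : Type*} [AddCommGroup K] [TopologicalSpace K] [IsTopologicalAddGroup K]
    [CompactSpace K] [ConnectedSpace K] [TopologicalSpace.MetrizableSpace K]
    [MeasurableSpace K] [BorelSpace K]
    (m : Measure K) [m.IsAddHaarMeasure] [IsProbabilityMeasure m]
    (I J : Set K) (hI : MeasurableSet I) (hJ : MeasurableSet J)
    (hIne : I.Nonempty) (hJne : J.Nonempty) :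
    min 1 (m I + m J) ≤ m (J - I) := by
  letI : MetricSpace K := TopologicalSpace.metrizableSpaceMetric K
  obtain ⟨i₀, hi₀⟩ := hIne
  obtain ⟨j₀, hj₀⟩ := hJne
  have hJI : J - I = J + (-I) := sub_eq_add_neg J I
  refine le_of_forall_lt fun r hr => ?_
  have hr1 : r < 1 := hr.trans_le (min_le_left _ _)
  have hr2 : r < m I + m J := hr.trans_le (min_le_right _ _)
  haveI h1 : Nonempty {D : Set K // D ⊆ I ∧ IsCompact D ∧ D.Nonempty} :=
    ⟨⟨{i₀}, Set.singleton_subset_iff.mpr hi₀, isCompact_singleton, Set.singleton_nonempty _⟩⟩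
  haveI h2 : Nonempty {C : Set K // C ⊆ J ∧ IsCompact C ∧ C.Nonempty} :=
    ⟨⟨{j₀}, Set.singleton_subset_iff.mpr hj₀, isCompact_singleton, Set.singleton_nonempty _⟩⟩
  have hsup : ∀ (T : Set K), MeasurableSet T →
      m T = ⨆ D : {D : Set K // D ⊆ T ∧ IsCompact D ∧ D.Nonempty}, m D.1 := by
    intro T hT
    refine le_antisymm (le_of_forall_lt fun c hc => ?_) (iSup_le fun D => measure_mono D.2.1)
    obtain ⟨D, hDT, hDcpt, hcD⟩ :=
      (MeasureTheory.Measure.InnerRegular.innerRegular (μ := m)) hT c hc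
    have hDne : D.Nonempty := by
      rcases D.eq_empty_or_nonempty with rfl | h
      · exact absurd hcD (by simp)
      · exact h
    exact lt_iSup_iff.mpr ⟨⟨D, hDT, hDcpt, hDne⟩, hcD⟩
  rw [hsup I hI, hsup J hJ, ENNReal.iSup_add] at hr2
  simp_rw [ENNReal.add_iSup] at hr2
  obtain ⟨D, hD⟩ := lt_iSup_iff.mp hr2
  obtain ⟨C, hC⟩ := lt_iSup_iff.mp hD
  have hmin : min 1 (m C.1 + m (-D.1)) ≤ m (C.1 + -D.1) :=
    KneserAux.kneser_compact m C.1 (-D.1) C.2.2.1 D.2.2.1.neg C.2.2.2 D.2.2.2.neg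
  have hDneg : m (-D.1 : Set K) = m D.1 := MeasureTheory.Measure.measure_neg m D.1
  have hsub : C.1 + -D.1 ⊆ J - I := by
    rw [hJI]
    exact Set.add_subset_add C.2.1 (Set.neg_subset_neg.mpr D.2.1)
  calc r < min 1 (m D.1 + m C.1) := lt_min hr1 hC
  _ = min 1 (m C.1 + m (-D.1)) := by rw [hDneg, add_comm]
  _ ≤ m (C.1 + -D.1) := hmin
  _ ≤ m (J - I) := measure_mono hsub
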